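/- Let d be a pseudo-metric on N ∪ C, let a, c' ∈ C with D = d(a,c') > 0, and let L = {i ∈ N : d(i,c') > D/4}. Let P be a set of k agents with k divisible by 3 and |L ∩ P| < k/3. Then Σ_{i∈P} d(i,a) > Σ_{i∈P} d(i,c'); in particular a does not minimize SC(P,·) when c' is available. -/
import Mathlib


/-- With `D = d(a,c') > 0`, `L = {i ∈ N : d(i,c') > D/4}`, and a
panel `P` of `k` agents (`3 ∣ k`) satisfying `|L ∩ P| < k/3`, we have
`Σ_{i∈P} d(i,a) > Σ_{i∈P} d(i,c')`; in particular `a` does not minimize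
`SC(P,·)` over a set of alternatives containing both `a` and `c'`. -/
theorem stmt_6 {V : Type*} [DecidableEq V] (d : V → V → ℝ)
    (hsymm : ∀ x y, d x y = d y x)
    (htri : ∀ x y z, d x z ≤ d x y + d y z)
    (hnonneg : ∀ x y, 0 ≤ d x y)
    (N C : Finset V) (a c' : V) (D : ℝ) (hD : D = d a c') (hDpos : 0 < D)
    (L : Finset V) (hL : L = N.filter (fun i => d i c' > D / 4))
    (k : ℕ) (hk3 : 3 ∣ k) (hkpos : 0 < k)
    (P : Finset V) (hPN : P ⊆ N) (hPcard : P.card = k)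
    (hLP : ((L ∩ P).card : ℝ) < (k : ℝ) / 3) :
    (∑ i ∈ P, d i a > ∑ i ∈ P, d i c') ∧
    (a ∈ C → c' ∈ C → ¬ (∀ c ∈ C, ∑ i ∈ P, d i a ≤ ∑ i ∈ P, d i c)) := by
  have key : ∑ i ∈ P, d i a > ∑ i ∈ P, d i c' := by
    rw [gt_iff_lt, ← sub_pos, ← Finset.sum_sub_distrib]
    have hsplit : ∑ i ∈ P, (d i a - d i c')
        = ∑ i ∈ P ∩ L, (d i a - d i c') + ∑ i ∈ P \ L, (d i a - d i c') := by
      rw [Finset.sum_inter_add_sum_sdiff]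
    set m : ℕ := (L ∩ P).card with hm
    have hmP : (P ∩ L).card = m := by rw [Finset.inter_comm]
    have hcd : (P \ L).card + m = k := by
      rw [← hmP, Finset.card_sdiff_add_card_inter, hPcard]
    have hmk : m ≤ k := by omega
    -- bound on P ∩ L
    have h1 : ∀ i ∈ P ∩ L, -D ≤ d i a - d i c' := by
      intro i _
      have := htri i c' a
      have h2 := hsymm c' a
      have h3 := hsymm a c'
      linarith [hD ▸ (by linarith [htri i a c'] : d i c' - d i a ≤ d a c')]
    have h2 : ∀ i ∈ P \ L, D / 2 ≤ d i a - d i c' := by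
      intro i hi
      obtain ⟨hiP, hiL⟩ := Finset.mem_sdiff.mp hi
      have hiN : i ∈ N := hPN hiP
      have hsmall : d i c' ≤ D / 4 := by
        by_contra hcon
        exact hiL (hL ▸ Finset.mem_filter.mpr ⟨hiN, lt_of_not_ge hcon⟩)
      have : D ≤ d i a + d i c' := by
        rw [hD, hsymm a c']
        calc d c' a ≤ d c' i + d i a := htri c' i a
        _ = d i a + d i c' := by rw [hsymm c' i]; ring
      linarith
    have b1 : (m : ℝ) * (-D) ≤ ∑ i ∈ P ∩ L, (d i a - d i c') := by
      have := Finset.card_nsmul_le_sum (P ∩ L) _ (-D) h1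
      rwa [hmP, nsmul_eq_mul] at this
    have b2 : ((k - m : ℕ) : ℝ) * (D / 2) ≤ ∑ i ∈ P \ L, (d i a - d i c') := by
      have := Finset.card_nsmul_le_sum (P \ L) _ (D / 2) h2
      have hc : (P \ L).card = k - m := by omega
      rwa [hc, nsmul_eq_mul] at this
    rw [hsplit]
    have hcast : ((k - m : ℕ) : ℝ) = (k : ℝ) - (m : ℝ) := by
      rw [Nat.cast_sub hmk]
    rw [hcast] at b2
    nlinarith [hLP]
  refine ⟨key, fun ha hc' h => ?_⟩
  exact absurd (h c' hc') (not_le.mpr key)
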